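/- Let u ≥ |v| ≥ 1. The function h(c) := g_{u,v}(c²/u), where g_{u,v}(x) = (u+|v|) − 2|v|(1−e^{−x})/x − (u−|v|)e^{−x}, has Taylor expansion h(c) = c² − α(u,v)·c⁴ + O(c⁶) as c → 0⁺, where α(u,v) = (3u − |v|)/(6u²). Precisely, lim_{c→0⁺} (h(c) − c² + α(u,v)c⁴)/c⁶ exists and is finite. -/

import Mathlib

open Real Filter

theorem stmt_12 (u v : ℤ) (hv : 1 ≤ |v|) (huv : |v| ≤ u)
    (g h : ℝ → ℝ)
    (hg : ∀ x : ℝ, 0 < x → g x = ((u : ℝ) + |(v : ℝ)|)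
        - 2 * |(v : ℝ)| * (1 - Real.exp (-x)) / x - ((u : ℝ) - |(v : ℝ)|) * Real.exp (-x))
    (hg0 : g 0 = 0)
    (hh : ∀ c : ℝ, h c = g (c ^ 2 / (u : ℝ))) :
    ∃ L : ℝ, Filter.Tendsto
      (fun c : ℝ => (h c - c ^ 2 + (3 * (u : ℝ) - |(v : ℝ)|) / (6 * (u : ℝ) ^ 2) * c ^ 4) / c ^ 6)
      (nhdsWithin 0 (Set.Ioi 0)) (nhds L) := by
  set U : ℝ := (u : ℝ) with hUdef
  set w : ℝ := |(v : ℝ)| with hwdef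
  have hw1 : (1:ℝ) ≤ w := by
    rw [hwdef, ← Int.cast_abs]; exact_mod_cast hv
  have hwU : w ≤ U := by
    rw [hwdef, hUdef, ← Int.cast_abs]; exact_mod_cast huv
  have hU0 : (0:ℝ) < U := lt_of_lt_of_le one_pos (hw1.trans hwU)
  have hUne : U ≠ 0 := ne_of_gt hU0
  set G : ℝ → ℝ := fun x => (U + w) * x - 2 * w * (1 - Real.exp (-x))
      - (U - w) * x * Real.exp (-x) - U * x ^ 2 + (3 * U - w) / 6 * x ^ 3 with hGdef
  set E : ℝ → ℝ := fun x => Real.exp (-x) - (1 - x + x^2/2 - x^3/6 + x^4/24) with hEdef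
  -- bound on E
  have hEbound : ∀ x : ℝ, |x| ≤ 1 → |E x| ≤ |x| ^ 5 / 20 := by
    intro x hx
    have h5 : (0:ℕ) < 5 := by norm_num
    have := Real.exp_bound (x := -x) (by rwa [abs_neg]) h5
    have hsum : ∑ m ∈ Finset.range 5, (-x) ^ m / (m.factorial : ℝ)
        = 1 - x + x^2/2 - x^3/6 + x^4/24 := by
      norm_num [Finset.sum_range_succ, Nat.factorial]
      ring
    rw [hsum, abs_neg] at this
    calc |E x| ≤ |x| ^ 5 * ((5:ℕ).succ / ((5:ℕ).factorial * 5)) := this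
      _ ≤ |x| ^ 5 / 20 := by
          have h5 : (0:ℝ) ≤ |x| ^ 5 := by positivity
          norm_num [Nat.factorial]
          nlinarith
  -- E x / x^4 → 0
  have hEtend : Tendsto (fun x => E x / x ^ 4) (nhdsWithin 0 (Set.Ioi 0)) (nhds 0) := by
    apply squeeze_zero_norm' (a := fun x : ℝ => x / 20)
    · filter_upwards [Ioo_mem_nhdsGT_of_mem (by norm_num : (0:ℝ) ∈ Set.Ico 0 1)] with x hx
      have hx0 : 0 < x := hx.1
      have hx1 : x ≤ 1 := le_of_lt hx.2
      have habs : |x| = x := abs_of_pos hx0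
      have hb := hEbound x (by rw [habs]; exact hx1)
      rw [habs] at hb
      have hx4 : (0:ℝ) < x ^ 4 := by positivity
      calc ‖E x / x ^ 4‖ = |E x| / x ^ 4 := by
            rw [Real.norm_eq_abs, abs_div, abs_of_pos hx4]
        _ ≤ (x ^ 5 / 20) / x ^ 4 := by gcongr
        _ = x / 20 := by field_simp
    · have : Tendsto (fun x : ℝ => x / 20) (nhdsWithin 0 (Set.Ioi 0)) (nhds (0 / 20)) :=
        (tendsto_id.div_const 20).mono_left nhdsWithin_le_nhds
      simpa using this
  -- G x / x^4 → (2U - w)/12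
  have hGtend : Tendsto (fun x => G x / x ^ 4) (nhdsWithin 0 (Set.Ioi 0))
      (nhds ((2*U - w)/12)) := by
    have heq : ∀ᶠ x in nhdsWithin (0:ℝ) (Set.Ioi 0),
        ((2*U - w)/12 - (U - w)/24 * x) + (2*w - (U - w)*x) * (E x / x ^ 4)
          = G x / x ^ 4 := by
      filter_upwards [self_mem_nhdsWithin] with x hx
      have hx0 : (x:ℝ) ≠ 0 := ne_of_gt hx
      have hGE : G x = x ^ 4 * ((2*U - w)/12 - (U - w)/24 * x)
          + (2*w - (U - w)*x) * E x := by
        simp only [hGdef, hEdef]; ring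
      rw [hGE]; field_simp
    have h1 : Tendsto (fun x : ℝ => (2*U - w)/12 - (U - w)/24 * x)
        (nhdsWithin 0 (Set.Ioi 0)) (nhds ((2*U - w)/12 - (U - w)/24 * 0)) := by
      exact (tendsto_const_nhds.sub ((tendsto_id.const_mul _).mono_left nhdsWithin_le_nhds))
    have h2 : Tendsto (fun x : ℝ => (2*w - (U - w)*x))
        (nhdsWithin 0 (Set.Ioi 0)) (nhds (2*w - (U - w)*0)) := by
      exact (tendsto_const_nhds.sub ((tendsto_id.const_mul _).mono_left nhdsWithin_le_nhds))
    have := (h1.add (h2.mul hEtend))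
    simp only [mul_zero, sub_zero, add_zero] at this
    exact this.congr' heq
  -- composition c ↦ c^2 / U
  have hphi : Tendsto (fun c : ℝ => c ^ 2 / U) (nhdsWithin 0 (Set.Ioi 0))
      (nhdsWithin 0 (Set.Ioi 0)) := by
    rw [tendsto_nhdsWithin_iff]
    constructor
    · have : Tendsto (fun c : ℝ => c ^ 2 / U) (nhds 0) (nhds (0 ^ 2 / U)) := by
        exact (Filter.Tendsto.pow tendsto_id 2).div_const U
      simpa using this.mono_left nhdsWithin_le_nhds
    · filter_upwards [self_mem_nhdsWithin] with c hc
      have : 0 < c := hc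
      exact div_pos (by positivity) hU0
  refine ⟨(1/U^3) * ((2*U - w)/12), ?_⟩
  have hmain := (hGtend.comp hphi).const_mul (1/U^3)
  refine hmain.congr' ?_
  filter_upwards [self_mem_nhdsWithin] with c hc
  have hc0 : (0:ℝ) < c := hc
  have hcne : c ≠ 0 := ne_of_gt hc0
  have hx0 : 0 < c ^ 2 / U := div_pos (by positivity) hU0
  rw [hh c, hg _ hx0]
  simp only [Function.comp, hGdef]
  field_simp
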